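/- Consider the imbalanced ℕ-RPS: the vertex set is {r i : i ≥ 1} ∪ {p i : i ≥ 1}, with beats relation given by: r i beats r j iff i < j; r i beats p j iff i ≠ j; p i beats r j iff j = i; p i beats p j iff j < i. Define v (r i) = v (p i) = 3^(-i) for i ≥ 1. Then v has total mass 1 (∑' over all vertices of v equals 1), and for every vertex o the expected payoff of o is zero: the sum ∑' over {x : o beats x} of v x equals the sum ∑' over {x : x beats o} of v x (both sums converge). Hence the imbalanced ℕ-RPS is playable with totally mixed symmetric Nash equilibrium v. -/

import Mathlib

/-- Vertices of the imbalanced ℕ-RPS: `Sum.inl i` is `r i`, `Sum.inr i` is `p i`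
(indices `i ≥ 1`). -/
abbrev NVertex := ℕ+ ⊕ ℕ+

/-- The beats relation of the imbalanced ℕ-RPS: `r i` beats `r j` iff `i < j`;
`r i` beats `p j` iff `i ≠ j`; `p i` beats `r j` iff `j = i`;
`p i` beats `p j` iff `j < i`. -/
def NBeats : NVertex → NVertex → Prop
  | Sum.inl i, Sum.inl j => i < j
  | Sum.inl i, Sum.inr j => i ≠ j
  | Sum.inr i, Sum.inl j => j = i
  | Sum.inr i, Sum.inr j => j < i

/-- The candidate Nash distribution: `v (r i) = v (p i) = 3⁻ⁱ`. -/
noncomputable def NNash : NVertex → ℝ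
  | Sum.inl i => ((3 : ℝ))⁻¹ ^ (i : ℕ)
  | Sum.inr i => ((3 : ℝ))⁻¹ ^ (i : ℕ)

/-! ### Auxiliary geometric-series machinery -/

/-- The geometric weights on `ℕ+`. -/
noncomputable def fgeo : ℕ+ → ℝ := fun i => (3:ℝ)⁻¹ ^ (i : ℕ)

lemma hnat : HasSum (fun n : ℕ => (3:ℝ)⁻¹ ^ n) (3/2) := by
  have h := hasSum_geometric_of_lt_one (by norm_num : (0:ℝ) ≤ 3⁻¹) (by norm_num)
  convert h using 1; norm_num

lemma hasSum_sumType {α β : Type*} {g : α ⊕ β → ℝ} {a b : ℝ}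
    (ha : HasSum (fun i => g (Sum.inl i)) a) (hb : HasSum (fun i => g (Sum.inr i)) b) :
    HasSum g (a + b) := by
  have h1 : HasSum (g ∘ (↑) : Set.range (Sum.inl : α → α ⊕ β) → ℝ) a := by
    rw [← (Equiv.ofInjective Sum.inl Sum.inl_injective).hasSum_iff]; exact ha
  have h2 : HasSum (g ∘ (↑) : Set.range (Sum.inr : β → α ⊕ β) → ℝ) b := by
    rw [← (Equiv.ofInjective Sum.inr Sum.inr_injective).hasSum_iff]; exact hb
  exact h1.add_isCompl Set.isCompl_range_inl_range_inr h2

/-- The tail `{j : ℕ+ // i ≤ j}` is in bijection with `ℕ`. -/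
def geEquiv (i : ℕ+) : ℕ ≃ {j : ℕ+ // i ≤ j} where
  toFun n := ⟨⟨(i:ℕ) + n, by positivity⟩, by change (i:ℕ) ≤ (i:ℕ) + n; omega⟩
  invFun j := (j:ℕ) - (i:ℕ)
  left_inv n := by simp
  right_inv j := by
    obtain ⟨j, hj⟩ := j
    have h : (i:ℕ) ≤ (j:ℕ) := (PNat.coe_le_coe i j).mpr hj
    exact Subtype.ext (PNat.eq (by show (i:ℕ) + ((j:ℕ) - i) = j; omega))

/-- The strict tail `{j : ℕ+ // i < j}` is in bijection with `ℕ`. -/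
def gtEquiv (i : ℕ+) : ℕ ≃ {j : ℕ+ // i < j} :=
  (geEquiv (i+1)).trans (Equiv.subtypeEquivRight (fun _ => PNat.add_one_le_iff))

lemma hGe (i : ℕ+) :
    HasSum (fun j : {j : ℕ+ // i ≤ j} => fgeo j) (3/2 * (3:ℝ)⁻¹ ^ (i:ℕ)) := by
  rw [← (geEquiv i).hasSum_iff]
  have : (fun n : ℕ => fgeo (geEquiv i n)) = fun n : ℕ => (3:ℝ)⁻¹ ^ (i:ℕ) * (3:ℝ)⁻¹ ^ n := by
    funext n; simp [fgeo, geEquiv, pow_add]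
  rw [Function.comp_def, this]
  have := hnat.mul_left ((3:ℝ)⁻¹ ^ (i:ℕ))
  convert this using 1; rfl; ring

lemma hGt (i : ℕ+) :
    HasSum (fun j : {j : ℕ+ // i < j} => fgeo j) ((3:ℝ)⁻¹ ^ (i:ℕ) / 2) := by
  rw [← (gtEquiv i).hasSum_iff]
  have : (fun n : ℕ => fgeo (gtEquiv i n)) = fun n : ℕ =>
      ((3:ℝ)⁻¹ ^ (i:ℕ) * 3⁻¹) * (3:ℝ)⁻¹ ^ n := by
    funext n
    simp [fgeo, gtEquiv, geEquiv, pow_add, pow_succ]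
  rw [Function.comp_def, this]
  have := hnat.mul_left ((3:ℝ)⁻¹ ^ (i:ℕ) * 3⁻¹)
  convert this using 1; rfl; ring

lemma hTot : HasSum fgeo (1/2) := by
  have h : HasSum (fun j : {j : ℕ+ // 1 ≤ j} => fgeo j) (3/2 * (3:ℝ)⁻¹ ^ ((1:ℕ+):ℕ)) := hGe 1
  rw [← ((Equiv.subtypeUnivEquiv (fun j : ℕ+ => j.one_le)).symm.hasSum_iff)] at h
  convert h using 1
  · funext j; rfl
  · norm_num

lemma Sfgeo : Summable fgeo := hTot.summable

lemma hCompl (P : ℕ+ → Prop) {a : ℝ} (hs : HasSum (fun j : {j : ℕ+ // P j} => fgeo j) a) :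
    HasSum (fun j : {j : ℕ+ // ¬ P j} => fgeo j) (1/2 - a) := by
  have hs' : HasSum (fgeo ∘ (↑) : {j : ℕ+ | P j} → ℝ) a := hs
  have hb := (Sfgeo.subtype {j : ℕ+ | P j}ᶜ).hasSum
  have h2 := hs'.add_compl hb
  have h3 := h2.unique hTot
  have h4 : (1/2 - a : ℝ) = ∑' j : ↥{j : ℕ+ | P j}ᶜ, (fgeo ∘ (↑)) j := by exact (eq_sub_of_add_eq' h3).symm
  rw [h4]
  exact hb

lemma transfer (P Q : ℕ+ → Prop) (h : ∀ j, P j ↔ Q j) {a : ℝ}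
    (hq : HasSum (fun j : {j : ℕ+ // Q j} => fgeo j) a) :
    HasSum (fun j : {j : ℕ+ // P j} => fgeo j) a :=
  ((Equiv.subtypeEquivRight h).hasSum_iff).mpr hq

lemma hEqL (i : ℕ+) : HasSum (fun j : {j : ℕ+ // j = i} => fgeo j) ((3:ℝ)⁻¹ ^ (i:ℕ)) :=
  hasSum_singleton i fgeo

lemma hEqR (i : ℕ+) : HasSum (fun j : {j : ℕ+ // i = j} => fgeo j) ((3:ℝ)⁻¹ ^ (i:ℕ)) :=
  transfer _ _ (fun _ => eq_comm) (hEqL i)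

lemma hNeL (i : ℕ+) :
    HasSum (fun j : {j : ℕ+ // j ≠ i} => fgeo j) (1/2 - (3:ℝ)⁻¹ ^ (i:ℕ)) :=
  hCompl (fun j => j = i) (hEqL i)

lemma hNeR (i : ℕ+) :
    HasSum (fun j : {j : ℕ+ // i ≠ j} => fgeo j) (1/2 - (3:ℝ)⁻¹ ^ (i:ℕ)) :=
  transfer _ _ (fun _ => ne_comm) (hNeL i)

lemma hLt (i : ℕ+) :
    HasSum (fun j : {j : ℕ+ // j < i} => fgeo j) (1/2 - 3/2 * (3:ℝ)⁻¹ ^ (i:ℕ)) := by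
  have h := hCompl (fun j => i ≤ j) (hGe i)
  exact transfer (fun j : ℕ+ => j < i) (fun j => ¬ i ≤ j) (fun j => by simp) h

lemma combine (p : NVertex → Prop) {a b : ℝ}
    (hl : HasSum (fun j : {j : ℕ+ // p (Sum.inl j)} => fgeo j) a)
    (hr : HasSum (fun j : {j : ℕ+ // p (Sum.inr j)} => fgeo j) b) :
    HasSum (fun x : {x : NVertex // p x} => NNash x) (a + b) := by
  have h := hasSum_sumType
    (g := (fun x : {x : NVertex // p x} => NNash x.1) ∘ (Equiv.subtypeSum (p := p)).symm)
    hl hr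
  exact ((Equiv.subtypeSum (p := p)).symm.hasSum_iff).mp h

/-- The distribution `NNash` has total mass one, and at every vertex `o` the expected
payoff is zero: the total mass of the vertices beaten by `o` equals the total mass of
the vertices beating `o` (both sums converging). Hence the imbalanced ℕ-RPS is
playable with totally mixed symmetric Nash equilibrium `NNash`. -/
theorem imbalanced_N_RPS_playable :
    Summable NNash ∧ (∑' x, NNash x) = 1 ∧
      ∀ o : NVertex,
        Summable (fun x : {x : NVertex // NBeats o x} => NNash x) ∧
        Summable (fun x : {x : NVertex // NBeats x o} => NNash x) ∧
        (∑' x : {x : NVertex // NBeats o x}, NNash x)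
          = ∑' x : {x : NVertex // NBeats x o}, NNash x := by
  have htotal : HasSum NNash 1 := by
    have h := hasSum_sumType (g := NNash) hTot hTot
    rw [show (1:ℝ) = 1/2 + 1/2 by norm_num]
    exact h
  refine ⟨htotal.summable, htotal.tsum_eq, ?_⟩
  rintro (i | i)
  · have hb := combine (NBeats (Sum.inl i)) (hGt i) (hNeR i)
    have ha := combine (fun x => NBeats x (Sum.inl i)) (hLt i) (hEqR i)
    exact ⟨hb.summable, ha.summable, by rw [hb.tsum_eq, ha.tsum_eq]; ring⟩
  · have hb := combine (NBeats (Sum.inr i)) (hEqL i) (hLt i)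
    have ha := combine (fun x => NBeats x (Sum.inr i)) (hNeL i) (hGt i)
    exact ⟨hb.summable, ha.summable, by rw [hb.tsum_eq, ha.tsum_eq]; ring⟩
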